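/- arXiv:2301.12014 — 3 statements merged into one kernel-verified Lean document; each statement's English description precedes it below -/
import Mathlib

section
/- Let G be a non-archimedean CLI Polish group, X a countable discrete Polish G-space, and 𝒢 = (G_n) ∈ dgnb(G). Then the tree T_𝒢^X is well-founded. -/
noncomputable section

/-- `omegaPart a` is ω(a): the largest limit ordinal `≤ a`, or `0` if there is none. -/
def omegaPart (a : Ordinal) : Ordinal :=
  sSup {b : Ordinal | (b = 0 ∨ Order.IsSuccLimit b) ∧ b ≤ a}

/-- `IsTree lt` says that the binary relation `lt` on `T` is a tree order: it is irreflexive,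
transitive, and the set of predecessors of any node is finite and linearly ordered. -/
def IsTree {T : Type*} (lt : T → T → Prop) : Prop :=
  (∀ s, ¬ lt s s) ∧
  (∀ s t u, lt s t → lt t u → lt s u) ∧
  (∀ s, {t | lt t s}.Finite) ∧
  (∀ s t u, lt t s → lt u s → t = u ∨ lt t u ∨ lt u t)

/-- The length `lh s` of a node of a tree: the number of its strict predecessors. -/
def lh {T : Type*} (lt : T → T → Prop) (s : T) : ℕ :=
  Nat.card {t | lt t s}

/-- The rank `ρ(T)` of a tree `(T, lt)`: for a well-founded tree it is
`sup { ρ_T(s) + 1 : s ∈ T }` where `ρ_T(s) = sup { ρ_T(t) + 1 : s < t }`;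
for an ill-founded tree we use the junk value `0`. -/
def rhoRel {T : Type u} (lt : T → T → Prop) : Ordinal.{u} :=
  letI := Classical.dec (WellFounded (Function.swap lt))
  if h : WellFounded (Function.swap lt) then ⨆ s : T, Order.succ ((h.apply s).rank) else 0

/-- The nodes of the tree `T_ℰ^X` associated to a sequence `E` of (equivalence) relations
on `X`: pairs `(n, C)` where `C` is a non-singleton class `[x]_{E n}`. -/
def TreeNode (X : Type u) (E : ℕ → X → X → Prop) : Type u :=
  {p : ℕ × Set X // ∃ x : X, p.2 = {y | E p.1 x y} ∧ p.2 ≠ {x}}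

/-- The tree order on `T_ℰ^X`: `(n, C) < (m, D)` iff `n < m` and `C ⊇ D`. -/
def nodeLT {X : Type u} (E : ℕ → X → X → Prop) :
    TreeNode X E → TreeNode X E → Prop :=
  fun s t => s.1.1 < t.1.1 ∧ t.1.2 ⊆ s.1.2

/-- The tree `T_ℰ^X` is well-founded: no infinite strictly increasing sequence. -/
def TreeWF (X : Type u) (E : ℕ → X → X → Prop) : Prop :=
  WellFounded (Function.swap (nodeLT E))

/-- The rank `ρ(T_ℰ^X)`. -/
def treeRho (X : Type u) (E : ℕ → X → X → Prop) : Ordinal.{u} :=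
  rhoRel (nodeLT E)

/-- A Polish group: a topological group whose topology is Polish. -/
def IsPolishGroup (G : Type u) [Group G] [TopologicalSpace G] : Prop :=
  IsTopologicalGroup G ∧ PolishSpace G

/-- A topological group is non-archimedean if the open subgroups form a
neighborhood base of the identity. -/
def IsNonArch (G : Type u) [Group G] [TopologicalSpace G] : Prop :=
  ∀ U ∈ nhds (1 : G), ∃ H : Subgroup G, IsOpen (H : Set G) ∧ (H : Set G) ⊆ U

/-- A topological group is CLI if it admits a compatible complete left-invariant metric. -/
def IsCLI (G : Type u) [Group G] [TopologicalSpace G] : Prop :=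
  ∃ m : MetricSpace G,
    m.toUniformSpace.toTopologicalSpace = ‹TopologicalSpace G› ∧
    @CompleteSpace G m.toUniformSpace ∧
    ∀ g h k : G, m.dist (g * h) (g * k) = m.dist h k

/-- A topological group is TSI if it admits a compatible complete two-sided-invariant metric. -/
def IsTSI (G : Type u) [Group G] [TopologicalSpace G] : Prop :=
  ∃ m : MetricSpace G,
    m.toUniformSpace.toTopologicalSpace = ‹TopologicalSpace G› ∧
    @CompleteSpace G m.toUniformSpace ∧
    ∀ g h k : G, m.dist (g * h) (g * k) = m.dist h k ∧ m.dist (h * g) (k * g) = m.dist h k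

/-- `Dgnb G` is the set `dgnb(G)`: decreasing sequences `(G_n)` of open subgroups of `G`
with `G_0 = G` forming a neighborhood base of `1_G`. -/
structure Dgnb (G : Type u) [Group G] [TopologicalSpace G] where
  seq : ℕ → Subgroup G
  isOpen : ∀ n, IsOpen ((seq n : Set G))
  antitone : ∀ n, seq (n + 1) ≤ seq n
  zero_eq_top : seq 0 = ⊤
  basis : ∀ U ∈ nhds (1 : G), ∃ n, ((seq n : Set G)) ⊆ U

/-- The orbit equivalence relation of (the action of) a subgroup `H ≤ G` on a `G`-space `X`:
`x ∼ y` iff `g • x = y` for some `g ∈ H`. -/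
def subOrbit {G : Type u} [Group G] (H : Subgroup G) (X : Type v) [MulAction G X] :
    X → X → Prop :=
  fun x y => ∃ g ∈ H, g • x = y

/-- The tree `T_𝒢^X` of a `𝒢 ∈ dgnb(G)` and a `G`-space `X`: nodes are pairs `(n, C)`
with `C` a non-singleton `G_n`-orbit. We record it by its defining sequence of relations. -/
def dgnbRel {G : Type u} [Group G] [TopologicalSpace G] (𝒢 : Dgnb G) (X : Type v)
    [MulAction G X] : ℕ → X → X → Prop :=
  fun n => subOrbit (𝒢.seq n) X

/-- `ρ^k(𝒢) = ρ(T_𝒢^{G/G_k})`, where `G` acts by left translation on `G/G_k`. -/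
def rhoK {G : Type u} [Group G] [TopologicalSpace G] (𝒢 : Dgnb G) (k : ℕ) : Ordinal.{u} :=
  treeRho (G ⧸ 𝒢.seq k) (dgnbRel 𝒢 (G ⧸ 𝒢.seq k))

/-- `ρ(𝒢) = ρ(T_𝒢^{X(𝒢)})` where `X(𝒢) = ⊔_k G/G_k` is the disjoint union of the coset
spaces, with `G` acting by left translation on each summand. -/
def rhoDgnb {G : Type u} [Group G] [TopologicalSpace G] (𝒢 : Dgnb G) : Ordinal.{u} :=
  treeRho (Σ k : ℕ, G ⧸ 𝒢.seq k)
    (fun n p q => ∃ g ∈ 𝒢.seq n, q = ⟨p.1, g • p.2⟩)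

/-- `G` is α-CLI if `ρ(𝒢) ≤ ω·α` for any (equivalently, some) `𝒢 ∈ dgnb(G)`. -/
def IsAlphaCLI (G : Type u) [Group G] [TopologicalSpace G] (α : Ordinal.{u}) : Prop :=
  ∀ 𝒢 : Dgnb G, rhoDgnb 𝒢 ≤ Ordinal.omega0 * α

/-- `G` is L-α-CLI if `rank(G) ≤ α`, i.e. `ω(ρ(𝒢)) ≤ ω·α` for any (equivalently, some)
`𝒢 ∈ dgnb(G)`. -/
def IsLAlphaCLI (G : Type u) [Group G] [TopologicalSpace G] (α : Ordinal.{u}) : Prop :=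
  ∀ 𝒢 : Dgnb G, omegaPart (rhoDgnb 𝒢) ≤ Ordinal.omega0 * α



lemma subOrbit_class_eq {G : Type*} [Group G] {H : Subgroup G} {X : Type*} [MulAction G X]
    {x y : X} (h : subOrbit H X x y) :
    {z | subOrbit H X x z} = {z | subOrbit H X y z} := by
  obtain ⟨g, hg, rfl⟩ := h
  ext z
  constructor
  · rintro ⟨g', hg', rfl⟩
    exact ⟨g' * g⁻¹, mul_mem hg' (inv_mem hg), by simp [mul_smul]⟩
  · rintro ⟨g', hg', rfl⟩
    exact ⟨g' * g, mul_mem hg' hg, by simp [mul_smul]⟩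

lemma subOrbit_self {G : Type*} [Group G] (H : Subgroup G) (X : Type*) [MulAction G X]
    (x : X) : subOrbit H X x x := ⟨1, one_mem H, one_smul G x⟩

lemma aux_cauchy {G : Type*} [Group G] [MetricSpace G]
    (hli : ∀ g h k : G, dist (g * h) (g * k) = dist h k) (F : ℕ → G)
    (hmem : ∀ U ∈ nhds (1 : G), ∃ N, ∀ j ≥ N, F j * (F N)⁻¹ ∈ U) :
    CauchySeq (fun k => (F k)⁻¹) := by
  rw [Metric.cauchySeq_iff']
  intro ε hε
  obtain ⟨N, hN⟩ := hmem (Metric.ball 1 ε) (Metric.ball_mem_nhds _ hε)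
  refine ⟨N, fun j hj => ?_⟩
  have h1 : dist ((F j)⁻¹) ((F N)⁻¹) = dist (F j * (F j)⁻¹) (F j * (F N)⁻¹) :=
    (hli (F j) ((F j)⁻¹) ((F N)⁻¹)).symm
  have h2 := hN j hj
  rw [Metric.mem_ball] at h2
  rw [h1, mul_inv_cancel, dist_comm]
  exact h2

lemma aux_limit {G : Type*} [MetricSpace G] [CompleteSpace G] (u : ℕ → G)
    (h : CauchySeq u) : ∃ x, Filter.Tendsto u Filter.atTop (nhds x) :=
  cauchySeq_tendsto_of_complete h

theorem statement_12 (G : Type) [Group G] [TopologicalSpace G] [IsTopologicalGroup G]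
    [PolishSpace G] (hna : IsNonArch G) (hcli : IsCLI G)
    (X : Type) [TopologicalSpace X] [DiscreteTopology X] [Countable X]
    [MulAction G X] [ContinuousSMul G X] (𝒢 : Dgnb G) :
    TreeWF X (dgnbRel 𝒢 X) := by
  obtain ⟨m, hm_top, hm_complete, hm_li⟩ := hcli
  haveI : IsIrrefl (TreeNode X (dgnbRel 𝒢 X)) (nodeLT (dgnbRel 𝒢 X)) :=
    ⟨fun s hs => lt_irrefl _ hs.1⟩
  haveI : IsTrans (TreeNode X (dgnbRel 𝒢 X)) (nodeLT (dgnbRel 𝒢 X)) :=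
    ⟨fun s t u h1 h2 => ⟨h1.1.trans h2.1, h2.2.trans h1.2⟩⟩
  haveI : IsStrictOrder (TreeNode X (dgnbRel 𝒢 X)) (nodeLT (dgnbRel 𝒢 X)) := ⟨⟩
  haveI := IsStrictOrder.swap (nodeLT (dgnbRel 𝒢 X))
  rw [TreeWF, RelEmbedding.wellFounded_iff_isEmpty]
  constructor
  intro emb
  set E := dgnbRel 𝒢 X with hE
  set f : ℕ → TreeNode X E := ⇑emb with hfdef
  have hf : ∀ k, nodeLT E (f k) (f (k + 1)) :=
    fun k => emb.map_rel_iff.mpr (Nat.lt_succ_self k)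
  set n : ℕ → ℕ := fun k => (f k).1.1 with hn
  set C : ℕ → Set X := fun k => (f k).1.2 with hCdef
  have hsm : StrictMono n := strictMono_nat_of_lt_succ (fun k => (hf k).1)
  have hC : ∀ k, C (k + 1) ⊆ C k := fun k => (hf k).2
  -- witnesses
  have hwit : ∀ k, ∃ x : X, C k = {y | E (n k) x y} ∧ C k ≠ {x} := fun k => (f k).2
  choose a ha1 ha2 using hwit
  have hamem : ∀ k, a k ∈ C k := by
    intro k
    rw [ha1 k]
    exact subOrbit_self _ _ _
  have hseq_mono : ∀ {i j : ℕ}, i ≤ j → 𝒢.seq j ≤ 𝒢.seq i :=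
    fun {i j} h => antitone_nat_of_succ_le 𝒢.antitone h
  -- connecting group elements
  have hstep : ∀ k, ∃ g ∈ 𝒢.seq (n k), g • a k = a (k + 1) := by
    intro k
    have : a (k + 1) ∈ C k := hC k (hamem (k + 1))
    rw [ha1 k] at this
    exact this
  choose g hg1 hg2 using hstep
  -- the partial products
  set F : ℕ → G := fun k => Nat.rec (motive := fun _ => G) 1 (fun k Fk => g k * Fk) k with hF
  have hF0 : F 0 = 1 := rfl
  have hFsucc : ∀ k, F (k + 1) = g k * F k := fun k => rfl
  have hFa : ∀ k, F k • a 0 = a k := by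
    intro k
    induction k with
    | zero => rw [hF0, one_smul]
    | succ k ih => rw [hFsucc, mul_smul, ih, hg2]
  have hFmem : ∀ j k, F (j + k) * (F j)⁻¹ ∈ 𝒢.seq (n j) := by
    intro j k
    induction k with
    | zero => simpa using one_mem _
    | succ k ih =>
      have : F (j + (k + 1)) * (F j)⁻¹ = g (j + k) * (F (j + k) * (F j)⁻¹) := by
        rw [← Nat.add_assoc, hFsucc, mul_assoc]
      rw [this]
      exact mul_mem (hseq_mono (hsm.le_iff_le.mpr (Nat.le_add_right j k)) (hg1 (j + k))) ih
  have hFmem' : ∀ j j', j ≤ j' → F j' * (F j)⁻¹ ∈ 𝒢.seq (n j) := by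
    intro j j' h
    obtain ⟨k, rfl⟩ := Nat.exists_eq_add_of_le h
    exact hFmem j k
  -- Cauchy
  have hli' : ∀ g h k : G, @dist G (@PseudoMetricSpace.toDist G m.toPseudoMetricSpace)
      (g * h) (g * k) = @dist G (@PseudoMetricSpace.toDist G m.toPseudoMetricSpace) h k :=
    hm_li
  have hcs : @CauchySeq G ℕ m.toUniformSpace _ (fun k => (F k)⁻¹) := by
    refine @aux_cauchy G _ m hli' F ?_
    intro U hU
    rw [show @nhds G m.toUniformSpace.toTopologicalSpace = @nhds G _ from by rw [hm_top]] at hU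
    obtain ⟨N', hN'⟩ := 𝒢.basis U hU
    refine ⟨N', fun j hj => hN' ?_⟩
    exact hseq_mono (hsm.le_apply) (hFmem' N' j hj)
  obtain ⟨h, hh⟩ := @aux_limit G m hm_complete _ hcs
  rw [show @nhds G m.toUniformSpace.toTopologicalSpace = @nhds G _ from by rw [hm_top]] at hh
  -- F tends to h⁻¹, so a k tends to y
  have hFt : Filter.Tendsto F Filter.atTop (nhds h⁻¹) := by
    have := hh.inv
    simpa using this
  set y : X := h⁻¹ • a 0 with hy
  have hat : Filter.Tendsto a Filter.atTop (nhds y) := by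
    have := hFt.smul (tendsto_const_nhds (x := a 0))
    rw [show (fun k => F k • a 0) = a from funext hFa] at this
    exact this
  rw [nhds_discrete, Filter.tendsto_pure] at hat
  obtain ⟨K, hK⟩ := Filter.eventually_atTop.mp hat
  -- neighborhood of 1 fixing y
  have hconty : Continuous (fun g : G => g • y) := continuous_id.smul continuous_const
  have hV : (fun g : G => g • y) ⁻¹' {y} ∈ nhds (1 : G) := by
    refine hconty.continuousAt.preimage_mem_nhds ?_
    exact (isOpen_discrete {y}).mem_nhds (by simp)
  obtain ⟨m0, hm0⟩ := 𝒢.basis _ hV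
  set k := max K m0 with hk
  have hky : a k = y := hK k (le_max_left _ _)
  -- C k has an element other than a k
  have hss : {a k} ⊂ C k := (Set.singleton_subset_iff.mpr (hamem k)).ssubset_of_ne
    fun heq => (ha2 k) heq.symm
  obtain ⟨z, hz, hzne⟩ := Set.exists_of_ssubset hss
  rw [Set.mem_singleton_iff] at hzne
  have hzE : E (n k) (a k) z := by
    have := hz; rw [ha1 k] at this; exact this
  obtain ⟨u, hu, hu2⟩ := hzE
  have hun : u ∈ 𝒢.seq m0 :=
    hseq_mono (le_trans (le_max_right K m0) hsm.le_apply) hu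
  have : u • y = y := hm0 hun
  rw [← hky] at this
  exact hzne (hu2 ▸ this)


end
end

section
/- Let G be a non-archimedean CLI Polish group, X a countable discrete Polish G-space, and let 𝒢 = (G_n), 𝒢' = (G_n') ∈ dgnb(G). Then ω(ρ(T_𝒢^X)) = ω(ρ(T_{𝒢'}^X)). -/
noncomputable section

set_option maxHeartbeats 1000000

namespace CLIAux

open Ordinal Order

/-! ### omegaPart lemmas -/

lemma omegaPart_bdd (a : Ordinal) :
    BddAbove {b : Ordinal | (b = 0 ∨ Order.IsSuccLimit b) ∧ b ≤ a} :=
  ⟨a, fun _ hb => hb.2⟩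

lemma omegaPart_ne (a : Ordinal) :
    Set.Nonempty {b : Ordinal | (b = 0 ∨ Order.IsSuccLimit b) ∧ b ≤ a} :=
  ⟨0, Or.inl rfl, zero_le⟩

lemma omegaPart_le_self (a : Ordinal) : omegaPart a ≤ a :=
  csSup_le (omegaPart_ne a) fun _ hb => hb.2

lemma le_omegaPart {c a : Ordinal} (hc : c = 0 ∨ Order.IsSuccLimit c) (h : c ≤ a) :
    c ≤ omegaPart a :=
  le_csSup (omegaPart_bdd a) ⟨hc, h⟩

lemma omegaPart_zero_or_limit (a : Ordinal) :
    omegaPart a = 0 ∨ Order.IsSuccLimit (omegaPart a) := by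
  rcases Ordinal.zero_or_succ_or_isSuccLimit (omegaPart a) with h | ⟨δ, hδ⟩ | h
  · exact Or.inl h
  · exfalso
    have hδlt : δ < omegaPart a := hδ ▸ Order.lt_succ δ
    obtain ⟨b, hb, hδb⟩ := exists_lt_of_lt_csSup (omegaPart_ne a) hδlt
    have hble : b ≤ omegaPart a := le_csSup (omegaPart_bdd a) hb
    have hbe : b = Order.succ δ := le_antisymm (hδ ▸ hble) (Order.succ_le_of_lt hδb)
    rcases hb.1 with h0 | hl
    · exact Ordinal.succ_ne_zero δ (hbe ▸ h0)
    · exact Order.not_isSuccLimit_succ δ (hbe ▸ hl)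
  · exact Or.inr h

lemma omegaPart_decomp (a : Ordinal) : ∃ j : ℕ, a = omegaPart a + j := by
  have h1 : omegaPart a ≤ a := omegaPart_le_self a
  have h2 : a - omegaPart a < Ordinal.omega0 := by
    by_contra h
    push_neg at h
    have hle : omegaPart a + Ordinal.omega0 ≤ a := by
      calc omegaPart a + Ordinal.omega0 ≤ omegaPart a + (a - omegaPart a) :=
            add_le_add_right h _
        _ = a := Ordinal.add_sub_cancel_of_le h1
    have hmem : omegaPart a + Ordinal.omega0 ≤ omegaPart a :=
      le_csSup (omegaPart_bdd a)
        ⟨Or.inr (Ordinal.isSuccLimit_add _ Ordinal.isSuccLimit_omega0), hle⟩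
    have hlt : omegaPart a < omegaPart a + Ordinal.omega0 := by
      have := add_lt_add_right Ordinal.omega0_pos (omegaPart a)
      simpa using this
    exact absurd hmem (not_le.mpr hlt)
  obtain ⟨j, hj⟩ := Ordinal.lt_omega0.mp h2
  exact ⟨j, by rw [← hj, Ordinal.add_sub_cancel_of_le h1]⟩

lemma limit_add_nat_lt {γ μ : Ordinal} (hγ : Order.IsSuccLimit γ) (h : μ < γ) (j : ℕ) :
    μ + (j : Ordinal) < γ := by
  induction j with
  | zero => simpa using h
  | succ j ih =>
    have h1 : Order.succ (μ + (j : Ordinal)) < γ := hγ.succ_lt ih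
    have e : μ + ((j + 1 : ℕ) : Ordinal) = Order.succ (μ + (j : Ordinal)) := by
      rw [Nat.cast_succ, ← add_assoc, Ordinal.add_one_eq_succ]
    rw [e]; exact h1

end CLIAux

namespace CLIAux

set_option linter.deprecated false

universe u
variable {X : Type u}

/-! ### Tree node helpers -/

/-- Construct a tree node from a basepoint and a witness of non-triviality. -/
def mkNode (E : ℕ → X → X → Prop) (n : ℕ) (x y : X) (h : E n x y) (hne : y ≠ x) :
    TreeNode X E :=
  ⟨(n, {z | E n x z}), x, rfl, by
    intro hc
    have hy : y ∈ (n, {z | E n x z}).2 := h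
    rw [hc] at hy
    exact hne hy⟩

lemma node_pair {E : ℕ → X → X → Prop} (hEq : ∀ n, Equivalence (E n))
    (s : TreeNode X E) : ∃ a b, a ∈ s.1.2 ∧ b ∈ s.1.2 ∧ a ≠ b := by
  obtain ⟨x₀, hset, hne⟩ := s.2
  have hx₀ : x₀ ∈ s.1.2 := by rw [hset]; exact (hEq s.1.1).refl x₀
  have hex : ∃ y ∈ s.1.2, y ≠ x₀ := by
    by_contra h
    push_neg at h
    exact hne (Set.eq_singleton_iff_unique_mem.mpr ⟨hx₀, fun y hy => h y hy⟩)
  obtain ⟨y, hy, hyne⟩ := hex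
  exact ⟨y, x₀, hy, hx₀, hyne⟩

lemma node_exists_ne {E : ℕ → X → X → Prop} (hEq : ∀ n, Equivalence (E n))
    (s : TreeNode X E) (x : X) : ∃ y ∈ s.1.2, y ≠ x := by
  obtain ⟨a, b, ha, hb, hab⟩ := node_pair hEq s
  by_cases hax : a = x
  · exact ⟨b, hb, fun hbx => hab (by rw [hax, hbx])⟩
  · exact ⟨a, ha, hax⟩

lemma rel_of_mem_mem {E : ℕ → X → X → Prop} (hEq : ∀ n, Equivalence (E n))
    {s : TreeNode X E} {x y : X} (hx : x ∈ s.1.2) (hy : y ∈ s.1.2) :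
    E s.1.1 x y := by
  obtain ⟨x₀, hset, -⟩ := s.2
  rw [hset] at hx hy
  exact (hEq s.1.1).trans ((hEq s.1.1).symm hx) hy

lemma mem_of_rel {E : ℕ → X → X → Prop} (hEq : ∀ n, Equivalence (E n))
    {s : TreeNode X E} {x z : X} (hx : x ∈ s.1.2) (hz : E s.1.1 x z) :
    z ∈ s.1.2 := by
  obtain ⟨x₀, hset, -⟩ := s.2
  rw [hset] at hx ⊢
  exact (hEq s.1.1).trans hx hz

lemma rel_le {E : ℕ → X → X → Prop} (hmono : ∀ n x y, E (n + 1) x y → E n x y)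
    {m n : ℕ} (h : m ≤ n) : ∀ x y, E n x y → E m x y := by
  induction h with
  | refl => exact fun _ _ h => h
  | step _ ih => exact fun x y hxy => ih x y (hmono _ x y hxy)

/-! ### Rank helpers -/

lemma succ_rank_le {E : ℕ → X → X → Prop} (hWF : TreeWF X E) {s t : TreeNode X E}
    (h : nodeLT E s t) : Order.succ ((hWF.apply t).rank) ≤ (hWF.apply s).rank :=
  Order.succ_le_of_lt ((hWF.apply _).rank_lt_of_rel (show Function.swap (nodeLT E) t s from h))

lemma exists_succ_of_succ_le {E : ℕ → X → X → Prop} (hWF : TreeWF X E)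
    {s : TreeNode X E} {γ : Ordinal} (h : Order.succ γ ≤ (hWF.apply s).rank) :
    ∃ t, nodeLT E s t ∧ γ ≤ (hWF.apply t).rank := by
  have hlt : γ < (hWF.apply s).rank := lt_of_lt_of_le (Order.lt_succ γ) h
  rw [(hWF.apply s).rank_eq, Ordinal.lt_iSup_iff] at hlt
  obtain ⟨⟨t, ht⟩, hlt⟩ := hlt
  exact ⟨t, ht, Order.lt_succ_iff.mp hlt⟩

end CLIAux

namespace CLIAux

set_option linter.deprecated false

universe u
variable {X : Type u}

lemma main_rank {E E' : ℕ → X → X → Prop}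
    (hEq : ∀ n, Equivalence (E n)) (hEq' : ∀ n, Equivalence (E' n))
    (hmono : ∀ n x y, E (n + 1) x y → E n x y)
    (hmono' : ∀ n x y, E' (n + 1) x y → E' n x y)
    (hWF : TreeWF X E) (hWF' : TreeWF X E')
    (r : ℕ → ℕ) (hrmono : Monotone r)
    (hr : ∀ ℓ x y, E (r ℓ) x y → E' ℓ x y) :
    ∀ γ : Ordinal.{u}, (γ = 0 ∨ Order.IsSuccLimit γ) → ∀ k : ℕ,
      ∀ s : TreeNode X E, ∀ t : TreeNode X E',
      s.1.2 ⊆ t.1.2 → r t.1.1 ≤ s.1.1 →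
      γ + ((r (t.1.1 + k) - s.1.1 : ℕ) : Ordinal) ≤ (hWF.apply s).rank →
      γ + (k : Ordinal) ≤ (hWF'.apply t).rank := by
  intro γ
  induction γ using Ordinal.induction with
  | h γ IHγ =>
    intro hγ k
    induction k with
    | zero =>
      intro s t hsub hrle hrank
      have hγs : γ ≤ (hWF.apply s).rank := le_trans (le_self_add) hrank
      rcases hγ with rfl | hlim
      · simpa using zero_le _
      · rw [Nat.cast_zero, add_zero]
        refine le_of_forall_lt fun β hβ => ?_
        obtain ⟨j, hj⟩ := omegaPart_decomp β
        have hμγ : omegaPart β < γ := lt_of_le_of_lt (omegaPart_le_self β) hβ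
        have hkey := IHγ (omegaPart β) hμγ (omegaPart_zero_or_limit β) (j + 1) s t
          hsub hrle (le_of_lt (lt_of_lt_of_le (limit_add_nat_lt hlim hμγ _) hγs))
        have hβlt : β < omegaPart β + ((j + 1 : ℕ) : Ordinal) :=
          calc β = omegaPart β + (j : Ordinal) := hj
            _ < omegaPart β + ((j + 1 : ℕ) : Ordinal) :=
              add_lt_add_right (by exact_mod_cast Nat.lt_succ_self j) _
        exact lt_of_lt_of_le hβlt hkey
    | succ k IHk =>
      -- Case where we can advance a level in the target tree.
      have case1 : ∀ s : TreeNode X E, ∀ t : TreeNode X E',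
          s.1.2 ⊆ t.1.2 → r t.1.1 ≤ s.1.1 → r (t.1.1 + 1) ≤ s.1.1 →
          γ + ((r (t.1.1 + (k + 1)) - s.1.1 : ℕ) : Ordinal) ≤ (hWF.apply s).rank →
          γ + ((k + 1 : ℕ) : Ordinal) ≤ (hWF'.apply t).rank := by
        intro s t hsub hrle hcase hrank
        obtain ⟨x, hxset, -⟩ := s.2
        have hxmem : x ∈ s.1.2 := by rw [hxset]; exact (hEq s.1.1).refl x
        have hsubcls : s.1.2 ⊆ {z | E' (t.1.1 + 1) x z} := by
          intro z hz
          exact hr _ _ _ (rel_le hmono hcase _ _ (rel_of_mem_mem hEq hxmem hz))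
        obtain ⟨y, hy, hyne⟩ := node_exists_ne hEq s x
        set t' : TreeNode X E' := mkNode E' (t.1.1 + 1) x y (hsubcls hy) hyne with ht'
        have hlt : nodeLT E' t t' := by
          refine ⟨Nat.lt_succ_self _, ?_⟩
          intro z hz
          exact mem_of_rel hEq' (hsub hxmem) (hmono' _ _ _ hz)
        have hrank' : γ + ((r (t.1.1 + 1 + k) - s.1.1 : ℕ) : Ordinal) ≤ (hWF.apply s).rank := by
          have e : t.1.1 + 1 + k = t.1.1 + (k + 1) := by omega
          rw [e]; exact hrank
        have hres : γ + (k : Ordinal) ≤ (hWF'.apply t').rank :=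
          IHk s t' hsubcls hcase hrank'
        have e2 : γ + ((k + 1 : ℕ) : Ordinal) = Order.succ (γ + (k : Ordinal)) := by
          rw [Nat.cast_succ, ← add_assoc, Ordinal.add_one_eq_succ]
        rw [e2]
        exact le_trans (Order.succ_le_succ hres) (succ_rank_le hWF' hlt)
      -- Measure induction to descend in the source tree until case1 applies.
      have main : ∀ M : ℕ, ∀ s : TreeNode X E, ∀ t : TreeNode X E',
          r (t.1.1 + 1) - s.1.1 ≤ M →
          s.1.2 ⊆ t.1.2 → r t.1.1 ≤ s.1.1 →
          γ + ((r (t.1.1 + (k + 1)) - s.1.1 : ℕ) : Ordinal) ≤ (hWF.apply s).rank →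
          γ + ((k + 1 : ℕ) : Ordinal) ≤ (hWF'.apply t).rank := by
        intro M
        induction M with
        | zero =>
          intro s t hM hsub hrle hrank
          exact case1 s t hsub hrle (by omega) hrank
        | succ M ihM =>
          intro s t hM hsub hrle hrank
          by_cases hc : r (t.1.1 + 1) ≤ s.1.1
          · exact case1 s t hsub hrle hc hrank
          · push_neg at hc
            have hm1 : 1 ≤ r (t.1.1 + (k + 1)) - s.1.1 := by
              have := hrmono (show t.1.1 + 1 ≤ t.1.1 + (k + 1) by omega)
              omega
            have hsucc : Order.succ (γ + ((r (t.1.1 + (k + 1)) - s.1.1 - 1 : ℕ) : Ordinal))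
                ≤ (hWF.apply s).rank := by
              have e : γ + (((r (t.1.1 + (k + 1)) - s.1.1 - 1) + 1 : ℕ) : Ordinal)
                  = Order.succ (γ + ((r (t.1.1 + (k + 1)) - s.1.1 - 1 : ℕ) : Ordinal)) := by
                rw [Nat.cast_succ, ← add_assoc, Ordinal.add_one_eq_succ]
              have e1 : (r (t.1.1 + (k + 1)) - s.1.1 - 1) + 1 = r (t.1.1 + (k + 1)) - s.1.1 := by
                omega
              rw [e1] at e
              rw [e] at hrank; exact hrank
            obtain ⟨s', hlt', hrank'⟩ := exists_succ_of_succ_le hWF hsucc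
            refine ihM s' t ?_ (hlt'.2.trans hsub) (hrle.trans (Nat.le_of_lt hlt'.1)) ?_
            · have := hlt'.1; omega
            · refine le_trans (add_le_add_right ?_ γ) hrank'
              have hss : s.1.1 < s'.1.1 := hlt'.1
              have hnat : r (t.1.1 + (k + 1)) - s'.1.1 ≤ r (t.1.1 + (k + 1)) - s.1.1 - 1 := by
                omega
              exact Nat.cast_le.mpr hnat
      intro s t hsub hrle hrank
      exact main (r (t.1.1 + 1) - s.1.1) s t le_rfl hsub hrle hrank

end CLIAux

namespace CLIAux

set_option linter.deprecated false

universe u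
variable {X : Type u}

lemma no_descending {T : Type u} {lt : T → T → Prop}
    (hWF : WellFounded (Function.swap lt)) (f : ℕ → T)
    (hf : ∀ n, lt (f n) (f (n + 1))) : False := by
  have H : ∀ a : T, Acc (Function.swap lt) a → ∀ n, f n ≠ a := by
    intro a ha
    induction ha with
    | intro b hb ih =>
      intro n hn
      exact ih (f (n + 1)) (hn ▸ hf n) (n + 1) rfl
  exact H (f 0) (hWF.apply (f 0)) 0 rfl

lemma wf_transfer {E E' : ℕ → X → X → Prop}
    (hEq : ∀ n, Equivalence (E n)) (hEq' : ∀ n, Equivalence (E' n))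
    (hmono : ∀ n x y, E (n + 1) x y → E n x y)
    (hmono' : ∀ n x y, E' (n + 1) x y → E' n x y)
    (href : ∀ n, ∃ ℓ, ∀ x y, E' ℓ x y → E n x y)
    (hWF : TreeWF X E) : TreeWF X E' := by
  by_contra h
  haveI : IsStrictOrder (TreeNode X E') (Function.swap (nodeLT E')) :=
    { irrefl := fun a ha => Nat.lt_irrefl _ ha.1
      trans := fun a b c hab hbc => ⟨Nat.lt_trans hbc.1 hab.1, hab.2.trans hbc.2⟩ }
  have h2 := (not_iff_not.mpr RelEmbedding.wellFounded_iff_isEmpty).mp h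
  rw [not_isEmpty_iff] at h2
  obtain ⟨e⟩ := h2
  set f : ℕ → TreeNode X E' := fun n => e n with hfdef
  have hf : ∀ n, nodeLT E' (f n) (f (n + 1)) := fun n =>
    e.map_rel_iff.mpr (Nat.lt_succ_self n)
  -- basic monotonicity along the branch
  have hstep : ∀ i j : ℕ, i ≤ j → (f i).1.1 ≤ (f j).1.1 ∧ (f j).1.2 ⊆ (f i).1.2 := by
    intro i j hij
    induction hij with
    | refl => exact ⟨le_rfl, subset_rfl⟩
    | @step j' hij ih =>
      exact ⟨le_trans ih.1 (Nat.le_of_lt (hf j').1), subset_trans (hf j').2 ih.2⟩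
  have hge : ∀ i : ℕ, i ≤ (f i).1.1 := by
    intro i
    induction i with
    | zero => exact Nat.zero_le _
    | succ i ih => exact Nat.lt_of_le_of_lt ih (hf i).1
  choose g hg using href
  -- cumulative maximum of the g's
  set K : ℕ → ℕ := fun n => Nat.rec (g 0) (fun m prev => max prev (g (m + 1))) n with hK
  have hKmono : Monotone K := monotone_nat_of_le_succ fun n => le_max_left _ _
  have hKg : ∀ n, g n ≤ K n := by
    intro n
    cases n with
    | zero => exact le_rfl
    | succ n => exact le_max_right _ _
  -- basepoints of the branch nodes
  have hxf : ∀ k : ℕ, ∃ x : X, (f k).1.2 = {y | E' (f k).1.1 x y} :=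
    fun k => ⟨(f k).2.choose, (f k).2.choose_spec.1⟩
  choose xf hxfs using hxf
  have hxmem : ∀ k, xf k ∈ (f k).1.2 := by
    intro k; rw [hxfs k]; exact (hEq' _).refl _
  -- key: elements of the k-th branch node are E n-related to its basepoint, K n ≤ k
  have key : ∀ n : ℕ, ∀ z ∈ (f (K n)).1.2, E n (xf (K n)) z := by
    intro n z hz
    have h1 : E' (f (K n)).1.1 (xf (K n)) z := by
      rw [hxfs (K n)] at hz; exact hz
    have h2 : E' (g n) (xf (K n)) z :=
      rel_le hmono' (le_trans (hKg n) (hge (K n))) _ _ h1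
    exact hg n _ _ h2
  -- build the branch in the E-tree
  have hy : ∀ n : ℕ, ∃ y ∈ (f (K n)).1.2, y ≠ xf (K n) :=
    fun n => node_exists_ne hEq' (f (K n)) (xf (K n))
  choose yf hyf hyne using hy
  set s : ℕ → TreeNode X E := fun n =>
    mkNode E n (xf (K n)) (yf n) (key n (yf n) (hyf n)) (hyne n) with hs
  have hlt : ∀ n, nodeLT E (s n) (s (n + 1)) := by
    intro n
    refine ⟨Nat.lt_succ_self n, ?_⟩
    intro z hz
    -- hz : E (n+1) (xf (K (n+1))) z ; goal : E n (xf (K n)) z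
    have h1 : E n (xf (K (n + 1))) z := hmono _ _ _ hz
    have h2 : xf (K (n + 1)) ∈ (f (K n)).1.2 :=
      (hstep (K n) (K (n + 1)) (hKmono (Nat.le_succ n))).2 (hxmem (K (n + 1)))
    have h3 : E n (xf (K n)) (xf (K (n + 1))) := key n _ h2
    exact (hEq n).trans h3 h1
  exact no_descending hWF s hlt

end CLIAux

namespace CLIAux

set_option linter.deprecated false

universe u
variable {X : Type u}

lemma omega_le {E E' : ℕ → X → X → Prop}
    (hEq : ∀ n, Equivalence (E n)) (hEq' : ∀ n, Equivalence (E' n))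
    (hmono : ∀ n x y, E (n + 1) x y → E n x y)
    (hmono' : ∀ n x y, E' (n + 1) x y → E' n x y)
    (href : ∀ ℓ, ∃ n, ∀ x y, E n x y → E' ℓ x y)
    (href' : ∀ n, ∃ ℓ, ∀ x y, E' ℓ x y → E n x y)
    (h0 : ∀ x y, E 0 x y → E' 0 x y) :
    omegaPart (treeRho X E) ≤ omegaPart (treeRho X E') := by
  by_cases hWF : TreeWF X E
  · have hWF' : TreeWF X E' := wf_transfer hEq hEq' hmono hmono' href' hWF
    choose r0 hr0 using href
    set r : ℕ → ℕ := fun ℓ => Nat.rec 0 (fun m prev => max (prev + 1) (r0 (m + 1))) ℓ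
      with hrdef
    have hrmono : Monotone r :=
      monotone_nat_of_le_succ fun n => le_trans (Nat.le_succ _) (le_max_left _ _)
    have hr : ∀ ℓ x y, E (r ℓ) x y → E' ℓ x y := by
      intro ℓ
      cases ℓ with
      | zero => exact h0
      | succ m =>
        intro x y hxy
        exact hr0 (m + 1) x y (rel_le hmono (le_max_right _ _) x y hxy)
    have hρE : treeRho X E = ⨆ s : TreeNode X E, Order.succ ((hWF.apply s).rank) := by
      simp only [treeRho, rhoRel]; exact dif_pos hWF
    have hρE' : treeRho X E' = ⨆ t : TreeNode X E', Order.succ ((hWF'.apply t).rank) := by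
      simp only [treeRho, rhoRel]; exact dif_pos hWF'
    refine le_omegaPart (omegaPart_zero_or_limit _) ?_
    rcases omegaPart_zero_or_limit (treeRho X E) with h0' | hlim
    · rw [h0']; exact zero_le
    · refine le_of_forall_lt fun β hβ => ?_
      obtain ⟨j, hj⟩ := omegaPart_decomp β
      have hμ : omegaPart β < omegaPart (treeRho X E) :=
        lt_of_le_of_lt (omegaPart_le_self β) hβ
      have hlt : omegaPart β + ((r (j + 1) : ℕ) : Ordinal) < treeRho X E :=
        lt_of_lt_of_le (limit_add_nat_lt hlim hμ _) (omegaPart_le_self _)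
      rw [hρE, Ordinal.lt_iSup_iff] at hlt
      obtain ⟨s, hs⟩ := hlt
      have hs' : omegaPart β + ((r (j + 1) : ℕ) : Ordinal) ≤ (hWF.apply s).rank :=
        Order.lt_succ_iff.mp hs
      obtain ⟨x, hxset, -⟩ := s.2
      have hxmem : x ∈ s.1.2 := by rw [hxset]; exact (hEq s.1.1).refl x
      obtain ⟨y, hymem, hyne⟩ := node_exists_ne hEq s x
      have hxy0 : E' 0 x y :=
        h0 x y (rel_le hmono (Nat.zero_le _) x y (rel_of_mem_mem hEq hxmem hymem))
      set t : TreeNode X E' := mkNode E' 0 x y hxy0 hyne with htdef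
      have hsub : s.1.2 ⊆ t.1.2 := by
        intro z hz
        exact h0 x z (rel_le hmono (Nat.zero_le _) x z (rel_of_mem_mem hEq hxmem hz))
      have harg : omegaPart β + ((r (0 + (j + 1)) - s.1.1 : ℕ) : Ordinal) ≤ (hWF.apply s).rank := by
        rw [Nat.zero_add]
        refine le_trans (add_le_add_right ?_ _) hs'
        exact Nat.cast_le.mpr (Nat.sub_le _ _)
      have hres := main_rank hEq hEq' hmono hmono' hWF hWF' r hrmono hr (omegaPart β)
        (omegaPart_zero_or_limit β) (j + 1) s t hsub (Nat.zero_le _) harg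
      rw [hρE']
      have hβlt : β < omegaPart β + ((j + 1 : ℕ) : Ordinal) :=
        calc β = omegaPart β + (j : Ordinal) := hj
          _ < _ := add_lt_add_right (by exact_mod_cast Nat.lt_succ_self j) _
      calc β < omegaPart β + ((j + 1 : ℕ) : Ordinal) := hβlt
        _ ≤ (hWF'.apply t).rank := hres
        _ < Order.succ ((hWF'.apply t).rank) := Order.lt_succ _
        _ ≤ ⨆ t' : TreeNode X E', Order.succ ((hWF'.apply t').rank) :=
            Ordinal.le_iSup (fun t' : TreeNode X E' => Order.succ ((hWF'.apply t').rank)) t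
  · have h0' : treeRho X E = 0 := by simp only [treeRho, rhoRel]; exact dif_neg hWF
    rw [h0']
    exact le_trans (omegaPart_le_self 0) zero_le

end CLIAux

theorem statement_14 (G : Type) [Group G] [TopologicalSpace G] [IsTopologicalGroup G]
    [PolishSpace G] (hna : IsNonArch G) (hcli : IsCLI G)
    (X : Type) [TopologicalSpace X] [DiscreteTopology X] [Countable X]
    [MulAction G X] [ContinuousSMul G X] (𝒢 𝒢' : Dgnb G) :
    omegaPart (treeRho X (dgnbRel 𝒢 X)) = omegaPart (treeRho X (dgnbRel 𝒢' X)) := by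
  classical
  have hEq : ∀ (H : Dgnb G) (n : ℕ), Equivalence (dgnbRel H X n) := by
    intro H n
    constructor
    · exact fun x => ⟨1, one_mem _, one_smul G x⟩
    · rintro x y ⟨g, hg, rfl⟩
      exact ⟨g⁻¹, inv_mem hg, inv_smul_smul g x⟩
    · rintro x y z ⟨g, hg, rfl⟩ ⟨g', hg', rfl⟩
      exact ⟨g' * g, mul_mem hg' hg, mul_smul g' g x⟩
  have hmono : ∀ (H : Dgnb G) (n : ℕ) (x y : X),
      dgnbRel H X (n + 1) x y → dgnbRel H X n x y := by
    rintro H n x y ⟨g, hg, rfl⟩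
    exact ⟨g, H.antitone n hg, rfl⟩
  have href : ∀ (H K : Dgnb G) (ℓ : ℕ), ∃ n, ∀ x y : X,
      dgnbRel H X n x y → dgnbRel K X ℓ x y := by
    intro H K ℓ
    obtain ⟨n, hn⟩ := H.basis (K.seq ℓ : Set G) ((K.isOpen ℓ).mem_nhds (one_mem _))
    exact ⟨n, by rintro x y ⟨g, hg, rfl⟩; exact ⟨g, hn hg, rfl⟩⟩
  have h0 : ∀ (H K : Dgnb G) (x y : X), dgnbRel H X 0 x y → dgnbRel K X 0 x y := by
    rintro H K x y ⟨g, hg, rfl⟩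
    refine ⟨g, ?_, rfl⟩
    rw [K.zero_eq_top]
    exact Subgroup.mem_top g
  apply le_antisymm
  · exact CLIAux.omega_le (hEq _) (hEq _) (hmono _) (hmono _) (href _ _) (href _ _) (h0 _ _)
  · exact CLIAux.omega_le (hEq _) (hEq _) (hmono _) (hmono _) (href _ _) (href _ _) (h0 _ _)

end
end

section
/- Let G be a non-archimedean CLI Polish group and 𝒢 = (G_n) ∈ dgnb(G). Then: (1) ρ(𝒢) = sup{ρ^k(𝒢) : k < ω}; (2) (ρ^k(𝒢))_{k<ω} is an increasing sequence of countable ordinals, each of which is either 0 or a successor ordinal. -/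
noncomputable section

set_option linter.deprecated false

noncomputable def WellFounded.rank {α : Type u} {r : α → α → Prop} (h : WellFounded r) (a : α) :
    Ordinal.{u} :=
  (h.apply a).rank

theorem WellFounded.rank_eq {α : Type u} {r : α → α → Prop} (h : WellFounded r) (a : α) :
    h.rank a = ⨆ b : { b // r b a }, Order.succ (h.rank b) :=
  (h.apply a).rank_eq

theorem WellFounded.rank_lt_of_rel {α : Type u} {r : α → α → Prop} (h : WellFounded r) {a b : α}
    (hab : r a b) : h.rank a < h.rank b :=
  Acc.rank_lt_of_rel _ hab

section WFproof
open Pointwise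

variable {G : Type} [Group G] [TopologicalSpace G] [IsTopologicalGroup G]

lemma subOrbit_refl {H : Subgroup G} {X : Type} [MulAction G X] (x : X) :
    subOrbit H X x x := ⟨1, H.one_mem, one_smul _ _⟩

lemma subOrbit_mono {H K : Subgroup G} {X : Type} [MulAction G X] (hHK : H ≤ K) {x y : X}
    (h : subOrbit H X x y) : subOrbit K X x y := by
  obtain ⟨g, hg, hgx⟩ := h; exact ⟨g, hHK hg, hgx⟩

lemma class_eq_of_mem {H : Subgroup G} {X : Type} [MulAction G X] {x y : X}
    (h : subOrbit H X x y) :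
    {z | subOrbit H X y z} = {z | subOrbit H X x z} := by
  obtain ⟨g, hg, rfl⟩ := h
  ext z
  constructor
  · rintro ⟨g', hg', rfl⟩
    exact ⟨g' * g, H.mul_mem hg' hg, (mul_smul _ _ _)⟩
  · rintro ⟨g', hg', rfl⟩
    exact ⟨g' * g⁻¹, H.mul_mem hg' (H.inv_mem hg), by rw [mul_smul, inv_smul_smul]⟩

lemma exists_tendsto_of_cauchy' {α : Type} [MetricSpace α] [CompleteSpace α]
    (w : ℕ → α) (hw : ∀ ε > (0:ℝ), ∃ N, ∀ i ≥ N, ∀ j ≥ i, dist (w i) (w j) < ε) :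
    ∃ x, Filter.Tendsto w Filter.atTop (nhds x) := by
  have : CauchySeq w := by
    rw [Metric.cauchySeq_iff']
    intro ε hε
    obtain ⟨N, hN⟩ := hw ε hε
    exact ⟨N, fun n hn => by rw [dist_comm]; exact hN N le_rfl n hn⟩
  exact cauchySeq_tendsto_of_complete this

lemma dgnb_antitone (𝒢 : Dgnb G) : ∀ {a b : ℕ}, a ≤ b → 𝒢.seq b ≤ 𝒢.seq a := by
  intro a b hab
  induction hab with
  | refl => exact le_rfl
  | step h ih => exact le_trans (𝒢.antitone _) ih

lemma treeWF_of_cli (hcli : IsCLI G) (𝒢 : Dgnb G) (X : Type) [MulAction G X]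
    (hstab : ∀ x : X, ∃ m, ∀ g ∈ 𝒢.seq m, g • x = x) :
    TreeWF X (dgnbRel 𝒢 X) := by
  rw [TreeWF]
  haveI : IsIrrefl (TreeNode X (dgnbRel 𝒢 X)) (Function.swap (nodeLT (dgnbRel 𝒢 X))) :=
    ⟨fun a h => lt_irrefl a.1.1 h.1⟩
  haveI : IsTrans (TreeNode X (dgnbRel 𝒢 X)) (Function.swap (nodeLT (dgnbRel 𝒢 X))) :=
    ⟨fun _ _ _ hab hbc => ⟨lt_trans hbc.1 hab.1, subset_trans hab.2 hbc.2⟩⟩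
  haveI : IsStrictOrder (TreeNode X (dgnbRel 𝒢 X)) (Function.swap (nodeLT (dgnbRel 𝒢 X))) := ⟨⟩
  rw [RelEmbedding.wellFounded_iff_isEmpty]
  by_contra hcon
  rw [not_isEmpty_iff] at hcon
  obtain ⟨f⟩ := hcon
  -- f : (· > ·) ↪r swap (nodeLT _)
  have hchain : ∀ i : ℕ, nodeLT (dgnbRel 𝒢 X) (f i) (f (i + 1)) :=
    fun i => f.map_rel_iff.2 (Nat.lt_succ_self i)
  set n : ℕ → ℕ := fun i => (f i).1.1 with hn
  set C : ℕ → Set X := fun i => (f i).1.2 with hC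
  have hnlt : ∀ i, n i < n (i + 1) := fun i => (hchain i).1
  have hCsub : ∀ i, C (i + 1) ⊆ C i := fun i => (hchain i).2
  have hnmono : StrictMono n := strictMono_nat_of_lt_succ hnlt
  have hni : ∀ i, i ≤ n i := fun i => hnmono.le_apply
  -- witnesses
  have hx : ∀ i, ∃ x : X, C i = {y | subOrbit (𝒢.seq (n i)) X x y} ∧ C i ≠ {x} :=
    fun i => (f i).2
  set x : ℕ → X := fun i => Classical.choose (hx i) with hxdef
  have hxspec : ∀ i, C i = {y | subOrbit (𝒢.seq (n i)) X (x i) y} ∧ C i ≠ {x i} :=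
    fun i => Classical.choose_spec (hx i)
  have hxmem : ∀ i, x i ∈ C i := fun i => by
    rw [(hxspec i).1]; exact subOrbit_refl _
  set p : ℕ → X := fun i => x (i + 1) with hp
  have hpmem : ∀ i, p i ∈ C i := fun i => hCsub i (hxmem (i + 1))
  have hclass : ∀ i, C i = {y | subOrbit (𝒢.seq (n i)) X (p i) y} := by
    intro i
    have h1 : subOrbit (𝒢.seq (n i)) X (x i) (p i) := by
      have := hpmem i; rwa [(hxspec i).1] at this
    rw [class_eq_of_mem h1, (hxspec i).1]
  -- connecting elements
  have hstep : ∀ i, ∃ g ∈ 𝒢.seq (n (i + 1)), g • p i = p (i + 1) := by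
    intro i
    have h2 : p (i + 1) ∈ C (i + 1) := hpmem (i + 1)
    rw [(hxspec (i + 1)).1] at h2
    exact h2
  set g : ℕ → G := fun i => Nat.rec 1 (fun i _ => Classical.choose (hstep i)) i with hg
  have hgspec : ∀ i, g (i + 1) ∈ 𝒢.seq (n (i + 1)) ∧ g (i + 1) • p i = p (i + 1) :=
    fun i => Classical.choose_spec (hstep i)
  set w : ℕ → G := fun i => Nat.rec 1 (fun i wi => wi * (g (i + 1))⁻¹) i with hw
  have hw0 : w 0 = 1 := rfl
  have hwsucc : ∀ i, w (i + 1) = w i * (g (i + 1))⁻¹ := fun i => rfl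
  have hwp : ∀ i, (w i)⁻¹ • p 0 = p i := by
    intro i
    induction i with
    | zero => simp [hw0]
    | succ i ih =>
      rw [hwsucc, mul_inv_rev, inv_inv, mul_smul, ih]
      exact (hgspec i).2
  have hcos : ∀ i j, i ≤ j → (w i)⁻¹ * w j ∈ 𝒢.seq (n (i + 1)) := by
    intro i j hij
    induction j, hij using Nat.le_induction with
    | base => simp
    | succ j hij ih =>
      rw [hwsucc, ← mul_assoc]
      exact (𝒢.seq _).mul_mem ih
        ((𝒢.seq _).inv_mem (dgnb_antitone 𝒢 (hnmono.le_iff_le.2 (by omega)) ((hgspec j).1)))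
  -- CLI metric
  obtain ⟨m, hmtop, hmcomp, hminv⟩ := hcli
  have hcauchy : ∀ ε > (0:ℝ), ∃ N, ∀ i ≥ N, ∀ j ≥ i, @dist G m.toDist (w i) (w j) < ε := by
    intro ε hε
    have hball : @IsOpen G m.toUniformSpace.toTopologicalSpace (@Metric.ball G m.toPseudoMetricSpace 1 ε) :=
      @Metric.isOpen_ball G m.toPseudoMetricSpace 1 ε
    rw [hmtop] at hball
    have hmem : (1 : G) ∈ @Metric.ball G m.toPseudoMetricSpace 1 ε := by
      rw [@Metric.mem_ball G m.toPseudoMetricSpace, @dist_self G m.toPseudoMetricSpace]; exact hε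
    obtain ⟨N, hN⟩ := 𝒢.basis _ (hball.mem_nhds hmem)
    refine ⟨N, fun i hi j hj => ?_⟩
    have h1 : (w i)⁻¹ * w j ∈ 𝒢.seq (n (i + 1)) := hcos i j hj
    have h2 : (w i)⁻¹ * w j ∈ @Metric.ball G m.toPseudoMetricSpace 1 ε :=
      hN (dgnb_antitone 𝒢 (le_trans (by omega : N ≤ i + 1) (hni (i + 1))) h1)
    rw [@Metric.mem_ball G m.toPseudoMetricSpace] at h2
    have h3 : m.dist (w i * ((w i)⁻¹ * w j)) (w i * 1) = m.dist ((w i)⁻¹ * w j) 1 :=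
      hminv (w i) _ 1
    rw [mul_inv_cancel_left, mul_one] at h3
    calc @dist G m.toDist (w i) (w j)
        = m.dist (w j) (w i) := @dist_comm G m.toPseudoMetricSpace _ _
      _ = m.dist ((w i)⁻¹ * w j) 1 := h3
      _ < ε := h2
  obtain ⟨wlim, hwlim⟩ := @exists_tendsto_of_cauchy' G m hmcomp w hcauchy
  rw [hmtop] at hwlim
  -- wlim is in each coset
  have hmemcoset : ∀ i, wlim ∈ (((w i) • ((𝒢.seq (n (i + 1)) : Subgroup G) : Set G)) : Set G) := by
    intro i
    have hclosed : IsClosed (((w i) • ((𝒢.seq (n (i + 1)) : Subgroup G) : Set G) : Set G)) :=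
      ((𝒢.seq (n (i+1))).isClosed_of_isOpen (𝒢.isOpen _)).smul (w i)
    refine hclosed.mem_of_tendsto hwlim ?_
    refine Filter.eventually_atTop.2 ⟨i, fun j hj => ?_⟩
    exact Set.mem_smul_set.2 ⟨(w i)⁻¹ * w j, hcos i j hj, by simp [smul_eq_mul]⟩
  set q : X := wlim⁻¹ • p 0 with hq
  have hqmem : ∀ i, subOrbit (𝒢.seq (n i)) X (p i) q := by
    intro i
    obtain ⟨v, hv, hvw⟩ := Set.mem_smul_set.1 (hmemcoset i)
    have hvw' : wlim = w i * v := by rw [← hvw]; simp [smul_eq_mul]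
    refine ⟨v⁻¹, (𝒢.seq (n i)).inv_mem (dgnb_antitone 𝒢 (hnmono.le_iff_le.2 (by omega)) hv), ?_⟩
    rw [← hwp i, hq, hvw', mul_inv_rev, mul_smul]
  -- contradiction with stabilizer
  obtain ⟨M, hM⟩ := hstab q
  have hqC : C M = {z | subOrbit (𝒢.seq (n M)) X q z} := by
    rw [hclass M, class_eq_of_mem (hqmem M)]
  have hsingle : C M = {q} := by
    rw [hqC]
    ext z
    simp only [Set.mem_setOf_eq, Set.mem_singleton_iff]
    constructor
    · rintro ⟨g', hg', rfl⟩
      exact hM g' (dgnb_antitone 𝒢 (hni M) hg')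
    · rintro rfl
      exact subOrbit_refl q
  have hxM : x M = q := by
    have := hxmem M; rw [hsingle] at this; exact this
  exact (hxspec M).2 (by rw [hsingle, hxM])

end WFproof
section Main
open Pointwise Function

variable {G : Type} [Group G] [TopologicalSpace G] [IsTopologicalGroup G]

lemma exists_ne_of_class_ne {H : Subgroup G} {X : Type} [MulAction G X] {C : Set X} {x : X}
    (hC : C = {z | subOrbit H X x z}) (h : C ≠ {x}) : ∃ z ∈ C, z ≠ x := by
  by_contra hcon
  push_neg at hcon
  refine h (Set.eq_singleton_iff_unique_mem.2 ⟨?_, hcon⟩)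
  rw [hC]; exact subOrbit_refl x

lemma image_class {H : Subgroup G} {X Y : Type} [MulAction G X] [MulAction G Y]
    (π : X → Y) (hπ : ∀ (g : G) (x : X), π (g • x) = g • π x) (x : X) :
    π '' {z | subOrbit H X x z} = {z | subOrbit H Y (π x) z} := by
  ext w
  constructor
  · rintro ⟨z, ⟨g, hg, rfl⟩, rfl⟩
    exact ⟨g, hg, (hπ g x).symm⟩
  · rintro ⟨g, hg, rfl⟩
    exact ⟨g • x, ⟨g, hg, rfl⟩, hπ g x⟩

lemma rank_le_of_map {α β : Type} {r : α → α → Prop} {r' : β → β → Prop}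
    (h : WellFounded (swap r)) (h' : WellFounded (swap r'))
    (htrans : ∀ a b c, r a b → r b c → r a c)
    (f : α → β) :
    ∀ s : α, (∀ a b, (a = s ∨ r s a) → r a b → r' (f a) (f b)) →
      h.rank s ≤ h'.rank (f s) := by
  intro s
  induction s using h.induction with
  | _ s IH =>
    intro hf
    rw [h.rank_eq]
    refine Ordinal.iSup_le ?_
    rintro ⟨b, hb⟩
    have hsb : r s b := hb
    have h1 : h.rank b ≤ h'.rank (f b) := by
      refine IH b hsb ?_
      rintro a c (rfl | hba) hac
      · exact hf a c (Or.inr hsb) hac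
      · exact hf a c (Or.inr (htrans s b a hsb hba)) hac
    have h2 : r' (f s) (f b) := hf s b (Or.inl rfl) hsb
    have h3 : h'.rank (f b) < h'.rank (f s) := h'.rank_lt_of_rel h2
    calc Order.succ (h.rank b) ≤ Order.succ (h'.rank (f b)) := Order.succ_le_succ h1
      _ ≤ h'.rank (f s) := Order.succ_le_of_lt h3

lemma rank_lt_omega1 {α : Type} [Countable α] {r : α → α → Prop} (h : WellFounded r) :
    ∀ a : α, h.rank a < (Cardinal.aleph 1).ord := by
  intro a
  induction a using h.induction with
  | _ a IH =>
    rw [h.rank_eq]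
    refine Ordinal.iSup_lt_ord ?_ ?_
    · rw [Cardinal.isRegular_aleph_one.cof_eq]
      exact (Cardinal.mk_le_aleph0).trans_lt Cardinal.aleph0_lt_aleph_one
    · rintro ⟨b, hb⟩
      exact (Cardinal.isSuccLimit_ord (Cardinal.aleph0_le_aleph 1)).succ_lt (IH b hb)

lemma treeRho_eq {X : Type} {E : ℕ → X → X → Prop} (h : TreeWF X E) :
    treeRho X E = ⨆ s : TreeNode X E, Order.succ (h.rank s) := by
  simp only [treeRho, rhoRel]
  exact dif_pos h

lemma nodeLT_trans {X : Type} {E : ℕ → X → X → Prop} (a b c : TreeNode X E)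
    (hab : nodeLT E a b) (hbc : nodeLT E b c) : nodeLT E a c :=
  ⟨lt_trans hab.1 hbc.1, subset_trans hbc.2 hab.2⟩

/-- The pull lemma: a node whose class is the image of a node's class under an
equivariant map has smaller rank. -/
lemma rank_le_pull {X Y : Type} [MulAction G X] [MulAction G Y] (𝒢 : Dgnb G)
    (π : X → Y) (hπ : ∀ (g : G) (x : X), π (g • x) = g • π x)
    (hX : TreeWF X (dgnbRel 𝒢 X)) (hY : TreeWF Y (dgnbRel 𝒢 Y)) :
    ∀ s' : TreeNode X (dgnbRel 𝒢 X), ∀ s : TreeNode Y (dgnbRel 𝒢 Y),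
      s.1.1 = s'.1.1 → s.1.2 = π '' s'.1.2 → hY.rank s ≤ hX.rank s' := by
  intro s'
  induction s' using hX.induction with
  | _ s' IH =>
    intro s hlev himg
    rw [hY.rank_eq]
    refine Ordinal.iSup_le ?_
    rintro ⟨t, hst⟩
    have hst : nodeLT (dgnbRel 𝒢 Y) s t := hst
    obtain ⟨xD, hD0, hDne⟩ := t.2
    have hD : (t.1).2 = {y | subOrbit (𝒢.seq (t.1).1) Y xD y} := hD0
    have hxD_in : xD ∈ s.1.2 := hst.2 (by rw [hD]; exact subOrbit_refl _)
    rw [himg] at hxD_in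
    obtain ⟨x', hx'mem, hx'eq⟩ := hxD_in
    have hne' : {z | subOrbit (𝒢.seq t.1.1) X x' z} ≠ {x'} := by
      obtain ⟨z, hz, hzne⟩ := exists_ne_of_class_ne hD hDne
      rw [hD] at hz
      obtain ⟨gz, hgz, rfl⟩ := hz
      intro hsingle
      have h1 : gz • x' ∈ {z | subOrbit (𝒢.seq t.1.1) X x' z} := ⟨gz, hgz, rfl⟩
      rw [hsingle, Set.mem_singleton_iff] at h1
      apply hzne
      rw [← hx'eq, ← hπ, h1, hx'eq]
    let t' : TreeNode X (dgnbRel 𝒢 X) :=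
      ⟨(t.1.1, {z | subOrbit (𝒢.seq t.1.1) X x' z}), ⟨x', rfl, hne'⟩⟩
    have hlt : nodeLT (dgnbRel 𝒢 X) s' t' := by
      constructor
      · show s'.1.1 < t.1.1
        rw [← hlev]; exact hst.1
      · show {z | subOrbit (𝒢.seq t.1.1) X x' z} ⊆ s'.1.2
        intro z hz
        have hz' : subOrbit (𝒢.seq s'.1.1) X x' z :=
          subOrbit_mono (dgnb_antitone 𝒢 (le_of_lt (hlev ▸ hst.1))) hz
        obtain ⟨x0, hx00, hx0ne⟩ := s'.2
        have hx0 : (s'.1).2 = {y | subOrbit (𝒢.seq (s'.1).1) X x0 y} := hx00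
        have hx' : subOrbit (𝒢.seq s'.1.1) X x0 x' := by
          have := hx'mem; rw [hx0] at this; exact this
        rw [hx0, ← class_eq_of_mem hx']
        exact hz'
    have himg' : t.1.2 = π '' t'.1.2 := by
      show t.1.2 = π '' {z | subOrbit (𝒢.seq t.1.1) X x' z}
      rw [image_class π hπ x', hx'eq, hD]
    calc Order.succ (hY.rank t) ≤ Order.succ (hX.rank t') :=
          Order.succ_le_succ (IH t' hlt t rfl himg')
      _ ≤ hX.rank s' := Order.succ_le_of_lt (hX.rank_lt_of_rel hlt)

/-- The push lemma: an injective equivariant map pushes nodes forward, not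
decreasing the rank. -/
lemma rank_le_push {X Y : Type} [MulAction G X] [MulAction G Y] (𝒢 : Dgnb G)
    (π : X → Y) (hπ : ∀ (g : G) (x : X), π (g • x) = g • π x) (hinj : Function.Injective π)
    (hX : TreeWF X (dgnbRel 𝒢 X)) (hY : TreeWF Y (dgnbRel 𝒢 Y))
    (s : TreeNode X (dgnbRel 𝒢 X)) :
    ∃ t : TreeNode Y (dgnbRel 𝒢 Y), hX.rank s ≤ hY.rank t := by
  have hmap : ∀ u : TreeNode X (dgnbRel 𝒢 X),
      ∃ x : Y, π '' u.1.2 = {y | subOrbit (𝒢.seq u.1.1) Y x y} ∧ π '' u.1.2 ≠ {x} := by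
    intro u
    obtain ⟨x, hx10, hx2⟩ := u.2
    have hx1 : (u.1).2 = {y | subOrbit (𝒢.seq (u.1).1) X x y} := hx10
    refine ⟨π x, by rw [hx1, image_class π hπ x], ?_⟩
    obtain ⟨z, hz, hzx⟩ := exists_ne_of_class_ne hx1 hx2
    intro hsing
    refine hzx (hinj ?_)
    rw [← Set.mem_singleton_iff, ← hsing]
    exact ⟨z, hz, rfl⟩
  let ψ : TreeNode X (dgnbRel 𝒢 X) → TreeNode Y (dgnbRel 𝒢 Y) :=
    fun u => ⟨(u.1.1, π '' u.1.2), hmap u⟩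
  refine ⟨ψ s, ?_⟩
  refine rank_le_of_map hX hY (nodeLT_trans) ψ s ?_
  intro a b _ hab
  exact ⟨hab.1, Set.image_mono hab.2⟩

lemma countable_quotient [PolishSpace G] (H : Subgroup G) (hH : IsOpen (H : Set G)) :
    Countable (G ⧸ H) := by
  obtain ⟨s, hsc, hsd⟩ := TopologicalSpace.exists_countable_dense G
  haveI := hsc.to_subtype
  have hsurj : Function.Surjective (fun d : s => (QuotientGroup.mk d.1 : G ⧸ H)) := by
    intro q
    obtain ⟨a, rfl⟩ := QuotientGroup.mk_surjective q
    have hopen : IsOpen ((a • (H : Set G) : Set G)) := hH.smul a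
    have hne : ((a • (H : Set G) : Set G)).Nonempty :=
      ⟨a, Set.mem_smul_set.2 ⟨1, H.one_mem, mul_one a⟩⟩
    obtain ⟨d, hd1, hd2⟩ := hsd.inter_open_nonempty _ hopen hne
    obtain ⟨h, hh, hha⟩ := Set.mem_smul_set.1 hd1
    refine ⟨⟨d, hd2⟩, ?_⟩
    show (QuotientGroup.mk d : G ⧸ H) = QuotientGroup.mk a
    refine (QuotientGroup.eq).2 ?_
    have : d = a * h := by rw [← hha]; simp [smul_eq_mul]
    rw [this]
    simpa using H.inv_mem hh
  exact hsurj.countable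

lemma countable_treeNode {X : Type} [Countable X] (E : ℕ → X → X → Prop) :
    Countable (TreeNode X E) := by
  have hinj : Function.Injective
      (fun u : TreeNode X E => (u.1.1, Classical.choose u.2)) := by
    intro u v huv
    have h1 : u.1.1 = v.1.1 := (Prod.ext_iff.1 huv).1
    have h2 : Classical.choose u.2 = Classical.choose v.2 := (Prod.ext_iff.1 huv).2
    have hu := (Classical.choose_spec u.2).1
    have hv := (Classical.choose_spec v.2).1
    refine Subtype.ext (Prod.ext h1 ?_)
    rw [hu, hv, h2, h1]
  exact hinj.countable

lemma stab_quotient (𝒢 : Dgnb G) (k : ℕ) :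
    ∀ x : G ⧸ 𝒢.seq k, ∃ m, ∀ g ∈ 𝒢.seq m, g • x = x := by
  intro x
  obtain ⟨a, rfl⟩ := QuotientGroup.mk_surjective x
  have hcont : Continuous (fun g : G => a⁻¹ * g * a) := by fun_prop
  have hopen : IsOpen ((fun g : G => a⁻¹ * g * a) ⁻¹' (𝒢.seq k : Set G)) :=
    (𝒢.isOpen k).preimage hcont
  have hmem : (1 : G) ∈ (fun g : G => a⁻¹ * g * a) ⁻¹' (𝒢.seq k : Set G) := by
    simp only [Set.mem_preimage, mul_one]
    simpa using (𝒢.seq k).one_mem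
  obtain ⟨m, hm⟩ := 𝒢.basis _ (hopen.mem_nhds hmem)
  refine ⟨m, fun g hg => ?_⟩
  have hin : a⁻¹ * g * a ∈ 𝒢.seq k := hm hg
  rw [MulAction.Quotient.smul_mk]
  refine (QuotientGroup.eq).2 ?_
  have : (g • a)⁻¹ * a = (a⁻¹ * g * a)⁻¹ := by
    simp [smul_eq_mul]; group
  rw [this]
  exact (𝒢.seq k).inv_mem hin

def sigmaMulAction (𝒢 : Dgnb G) : MulAction G (Σ k : ℕ, G ⧸ 𝒢.seq k) where
  smul g p := ⟨p.1, g • p.2⟩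
  one_smul p := by
    cases p with
    | mk k c => show (⟨k, (1 : G) • c⟩ : Σ k : ℕ, G ⧸ 𝒢.seq k) = ⟨k, c⟩; rw [one_smul]
  mul_smul g h p := by
    cases p with
    | mk k c =>
      show (⟨k, (g * h) • c⟩ : Σ k : ℕ, G ⧸ 𝒢.seq k) = ⟨k, g • (h • c)⟩
      rw [mul_smul]

lemma sigmaRel_eq (𝒢 : Dgnb G) :
    (fun n (p q : Σ k : ℕ, G ⧸ 𝒢.seq k) => ∃ g ∈ 𝒢.seq n, q = ⟨p.1, g • p.2⟩) =
      @dgnbRel G _ _ 𝒢 _ (sigmaMulAction 𝒢) := by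
  funext n p q
  apply propext
  constructor
  · rintro ⟨g, hg, rfl⟩; exact ⟨g, hg, rfl⟩
  · rintro ⟨g, hg, rfl⟩; exact ⟨g, hg, rfl⟩

end Main
theorem statement_16 (G : Type) [Group G] [TopologicalSpace G] [IsTopologicalGroup G]
    [PolishSpace G] (hna : IsNonArch G) (hcli : IsCLI G) (𝒢 : Dgnb G) :
    (rhoDgnb 𝒢 = ⨆ k : ℕ, rhoK 𝒢 k) ∧
    (∀ k, rhoK 𝒢 k ≤ rhoK 𝒢 (k + 1)) ∧
    (∀ k, rhoK 𝒢 k < (Cardinal.aleph 1).ord) ∧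
    (∀ k, rhoK 𝒢 k = 0 ∨ ∃ β, rhoK 𝒢 k = Order.succ β) := by
  letI : MulAction G (Σ k : ℕ, G ⧸ 𝒢.seq k) := sigmaMulAction 𝒢
  -- well-foundedness of all the trees involved
  have Wk : ∀ k, TreeWF (G ⧸ 𝒢.seq k) (dgnbRel 𝒢 (G ⧸ 𝒢.seq k)) :=
    fun k => treeWF_of_cli hcli 𝒢 _ (stab_quotient 𝒢 k)
  have hstabS : ∀ p : (Σ k : ℕ, G ⧸ 𝒢.seq k), ∃ m, ∀ g ∈ 𝒢.seq m, g • p = p := by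
    rintro ⟨k, c⟩
    obtain ⟨m, hm⟩ := stab_quotient 𝒢 k c
    refine ⟨m, fun g hg => ?_⟩
    show (⟨k, g • c⟩ : Σ k : ℕ, G ⧸ 𝒢.seq k) = ⟨k, c⟩
    rw [hm g hg]
  have WSig : TreeWF (Σ k : ℕ, G ⧸ 𝒢.seq k) (dgnbRel 𝒢 (Σ k : ℕ, G ⧸ 𝒢.seq k)) :=
    treeWF_of_cli hcli 𝒢 _ hstabS
  -- the sup formulas
  have hk : ∀ k, rhoK 𝒢 k =
      ⨆ s : TreeNode (G ⧸ 𝒢.seq k) (dgnbRel 𝒢 (G ⧸ 𝒢.seq k)), Order.succ ((Wk k).rank s) :=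
    fun k => treeRho_eq (Wk k)
  have hSig : rhoDgnb 𝒢 = ⨆ s : TreeNode (Σ k : ℕ, G ⧸ 𝒢.seq k)
      (dgnbRel 𝒢 (Σ k : ℕ, G ⧸ 𝒢.seq k)), Order.succ (WSig.rank s) := by
    have h1 : rhoDgnb 𝒢 = treeRho (Σ k : ℕ, G ⧸ 𝒢.seq k)
        (dgnbRel 𝒢 (Σ k : ℕ, G ⧸ 𝒢.seq k)) :=
      congrArg (treeRho (Σ k : ℕ, G ⧸ 𝒢.seq k)) (sigmaRel_eq 𝒢)
    rw [h1, treeRho_eq WSig]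
  refine ⟨?_, ?_, ?_, ?_⟩
  · -- (1) rhoDgnb = sup rhoK
    rw [hSig]
    apply le_antisymm
    · refine Ordinal.iSup_le fun s => ?_
      obtain ⟨p, hp1, hp2⟩ := s.2
      have hp1' : s.1.2 = {y | subOrbit (𝒢.seq s.1.1) _ p y} := hp1
      set k := p.1 with hkdef
      let ι : G ⧸ 𝒢.seq k → (Σ k : ℕ, G ⧸ 𝒢.seq k) := fun c => ⟨k, c⟩
      have hι : ∀ (g : G) (c : G ⧸ 𝒢.seq k), ι (g • c) = g • ι c := fun g c => rfl
      have himgclass : ι '' {z | subOrbit (𝒢.seq s.1.1) (G ⧸ 𝒢.seq k) p.2 z}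
          = {y | subOrbit (𝒢.seq s.1.1) _ p y} := by
        rw [image_class ι hι p.2]
      have hne : {z | subOrbit (𝒢.seq s.1.1) (G ⧸ 𝒢.seq k) p.2 z} ≠ {p.2} := by
        intro hsing
        apply hp2
        rw [hp1', ← himgclass, hsing, Set.image_singleton]
      let s₀ : TreeNode (G ⧸ 𝒢.seq k) (dgnbRel 𝒢 (G ⧸ 𝒢.seq k)) :=
        ⟨(s.1.1, {z | subOrbit (𝒢.seq s.1.1) (G ⧸ 𝒢.seq k) p.2 z}), ⟨p.2, rfl, hne⟩⟩
      have himg : s.1.2 = ι '' s₀.1.2 := by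
        show s.1.2 = ι '' {z | subOrbit (𝒢.seq s.1.1) (G ⧸ 𝒢.seq k) p.2 z}
        rw [himgclass, hp1']
      have hrank : WSig.rank s ≤ (Wk k).rank s₀ :=
        rank_le_pull 𝒢 ι hι (Wk k) WSig s₀ s rfl himg
      calc Order.succ (WSig.rank s) ≤ Order.succ ((Wk k).rank s₀) := Order.succ_le_succ hrank
        _ ≤ rhoK 𝒢 k := by rw [hk k]; exact Ordinal.le_iSup _ s₀
        _ ≤ ⨆ k, rhoK 𝒢 k := Ordinal.le_iSup _ k
    · refine Ordinal.iSup_le fun k => ?_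
      rw [hk k]
      refine Ordinal.iSup_le fun s => ?_
      let ι : G ⧸ 𝒢.seq k → (Σ k : ℕ, G ⧸ 𝒢.seq k) := fun c => ⟨k, c⟩
      have hι : ∀ (g : G) (c : G ⧸ 𝒢.seq k), ι (g • c) = g • ι c := fun g c => rfl
      have hinj : Function.Injective ι := fun a b hab => (@sigma_mk_injective ℕ (fun j => G ⧸ 𝒢.seq j) k) hab
      obtain ⟨t, hrank⟩ := rank_le_push 𝒢 ι hι hinj (Wk k) WSig s
      calc Order.succ ((Wk k).rank s) ≤ Order.succ (WSig.rank t) := Order.succ_le_succ hrank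
        _ ≤ _ := Ordinal.le_iSup _ t
  · -- (2) monotone
    intro k
    let π : G ⧸ 𝒢.seq (k + 1) → G ⧸ 𝒢.seq k := Subgroup.quotientMapOfLE (𝒢.antitone k)
    have he : ∀ b : G, π (QuotientGroup.mk b) = QuotientGroup.mk b :=
      fun b => Subgroup.quotientMapOfLE_apply_mk (𝒢.antitone k) b
    have hπ : ∀ (g : G) (c : G ⧸ 𝒢.seq (k + 1)), π (g • c) = g • π c := by
      intro g c
      obtain ⟨a, rfl⟩ := QuotientGroup.mk_surjective c
      rw [MulAction.Quotient.smul_mk, he, he, MulAction.Quotient.smul_mk]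
    rw [hk k, hk (k + 1)]
    refine Ordinal.iSup_le fun s => ?_
    obtain ⟨x, hx10, hx2⟩ := s.2
    have hx1 : s.1.2 = {y | subOrbit (𝒢.seq s.1.1) (G ⧸ 𝒢.seq k) x y} := hx10
    -- lift x
    obtain ⟨a, ha⟩ := QuotientGroup.mk_surjective x
    let x' : G ⧸ 𝒢.seq (k + 1) := QuotientGroup.mk a
    have hπx' : π x' = x := by
      show π (QuotientGroup.mk a) = x
      rw [he, ha]
    have hne' : {z | subOrbit (𝒢.seq s.1.1) (G ⧸ 𝒢.seq (k + 1)) x' z} ≠ {x'} := by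
      obtain ⟨z, hz, hzne⟩ := exists_ne_of_class_ne hx1 hx2
      rw [hx1] at hz
      obtain ⟨gz, hgz, rfl⟩ := hz
      intro hsing
      have h1 : gz • x' ∈ {z | subOrbit (𝒢.seq s.1.1) (G ⧸ 𝒢.seq (k + 1)) x' z} :=
        ⟨gz, hgz, rfl⟩
      rw [hsing, Set.mem_singleton_iff] at h1
      apply hzne
      rw [← hπx', ← hπ, h1, hπx']
    let s' : TreeNode (G ⧸ 𝒢.seq (k + 1)) (dgnbRel 𝒢 (G ⧸ 𝒢.seq (k + 1))) :=
      ⟨(s.1.1, {z | subOrbit (𝒢.seq s.1.1) (G ⧸ 𝒢.seq (k + 1)) x' z}), ⟨x', rfl, hne'⟩⟩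
    have himg : s.1.2 = π '' s'.1.2 := by
      show s.1.2 = π '' {z | subOrbit (𝒢.seq s.1.1) (G ⧸ 𝒢.seq (k + 1)) x' z}
      rw [image_class π hπ x', hπx', hx1]
    have hrank : (Wk k).rank s ≤ (Wk (k + 1)).rank s' :=
      rank_le_pull 𝒢 π hπ (Wk (k + 1)) (Wk k) s' s rfl himg
    calc Order.succ ((Wk k).rank s) ≤ Order.succ ((Wk (k + 1)).rank s') :=
          Order.succ_le_succ hrank
      _ ≤ _ := Ordinal.le_iSup _ s'
  · -- (3) countable
    intro k
    haveI : Countable (G ⧸ 𝒢.seq k) := countable_quotient _ (𝒢.isOpen k)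
    haveI : Countable (TreeNode (G ⧸ 𝒢.seq k) (dgnbRel 𝒢 (G ⧸ 𝒢.seq k))) :=
      countable_treeNode _
    rw [hk k]
    refine Ordinal.iSup_lt_ord ?_ ?_
    · rw [Cardinal.isRegular_aleph_one.cof_eq]
      exact (Cardinal.mk_le_aleph0).trans_lt Cardinal.aleph0_lt_aleph_one
    · intro s
      exact (Cardinal.isSuccLimit_ord (Cardinal.aleph0_le_aleph 1)).succ_lt
        (rank_lt_omega1 (Wk k) s)
  · -- (4) zero or successor
    intro k
    by_cases hX : ∃ x y : G ⧸ 𝒢.seq k, x ≠ y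
    · right
      obtain ⟨x, y, hxy⟩ := hX
      have htriv : ∀ z w : G ⧸ 𝒢.seq k, subOrbit (𝒢.seq 0) (G ⧸ 𝒢.seq k) z w := by
        intro z w
        obtain ⟨a, rfl⟩ := QuotientGroup.mk_surjective z
        obtain ⟨b, rfl⟩ := QuotientGroup.mk_surjective w
        refine ⟨b * a⁻¹, by rw [𝒢.zero_eq_top]; exact Subgroup.mem_top _, ?_⟩
        rw [MulAction.Quotient.smul_mk]
        congr 1
        simp [smul_eq_mul]
      have huniv : (Set.univ : Set (G ⧸ 𝒢.seq k)) = {w | subOrbit (𝒢.seq 0) _ x w} :=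
        (Set.eq_univ_of_forall fun w => htriv x w).symm
      have hneuniv : (Set.univ : Set (G ⧸ 𝒢.seq k)) ≠ {x} := by
        intro h
        have : y ∈ ({x} : Set (G ⧸ 𝒢.seq k)) := h ▸ Set.mem_univ y
        exact hxy (Set.mem_singleton_iff.1 this).symm
      let root : TreeNode (G ⧸ 𝒢.seq k) (dgnbRel 𝒢 (G ⧸ 𝒢.seq k)) :=
        ⟨(0, Set.univ), ⟨x, huniv, hneuniv⟩⟩
      refine ⟨(Wk k).rank root, ?_⟩
      rw [hk k]
      apply le_antisymm
      · refine Ordinal.iSup_le fun s => ?_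
        rcases Nat.eq_zero_or_pos s.1.1 with h0 | hpos
        · have hs : s = root := by
            obtain ⟨xs, hxs0, _⟩ := s.2
            have hxs : s.1.2 = {w | subOrbit (𝒢.seq s.1.1) (G ⧸ 𝒢.seq k) xs w} := hxs0
            refine Subtype.ext (Prod.ext h0 ?_)
            show s.1.2 = Set.univ
            rw [hxs]
            refine Set.eq_univ_of_forall fun w => ?_
            have := htriv xs w
            rw [← h0] at this
            exact this
          rw [hs]
        · have hlt : nodeLT (dgnbRel 𝒢 (G ⧸ 𝒢.seq k)) root s := by
            refine ⟨hpos, ?_⟩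
            show s.1.2 ⊆ Set.univ
            exact Set.subset_univ _
          exact Order.succ_le_succ (le_of_lt ((Wk k).rank_lt_of_rel hlt))
      · exact Ordinal.le_iSup _ root
    · left
      push_neg at hX
      haveI : IsEmpty (TreeNode (G ⧸ 𝒢.seq k) (dgnbRel 𝒢 (G ⧸ 𝒢.seq k))) := by
        refine ⟨fun s => ?_⟩
        obtain ⟨xs, hxs0, hxs2⟩ := s.2
        refine hxs2 ?_
        rw [hxs0]
        refine Set.eq_singleton_iff_unique_mem.2 ⟨?_, fun z _ => hX z xs⟩
        exact subOrbit_refl xs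
      rw [hk k, ciSup_of_empty]
      exact Ordinal.bot_eq_zero

end
end
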